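/- arXiv:2009.01276 — 3 statements merged into one kernel-verified Lean document; each statement's English description precedes it below -/
import Mathlib

section
/- Let W be a standard Brownian motion and for x in [a,b] let sigma^x = inf{t >= 0 : x + W_t not in [a,b]} be the exit time from the closed interval. Then for every x in [a,b], liminf over any sequence x_n -> x (with x_n in (a,b)) of the open-interval exit times tau^{x_n} is at least tau^x, and limsup of the closed-interval exit times sigma^{x_n} is at most sigma^x, pathwise (for every omega). -/
open MeasureTheory ProbabilityTheory Filter Set
open scoped ENNReal NNReal

/-- A standard one-dimensional Brownian motion: starts at `0`, has continuous paths,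
Gaussian increments of the right variance, and independent increments. -/
def IsBrownianMotion {Ω : Type*} [MeasureSpace Ω] (W : ℝ → Ω → ℝ) : Prop :=
  (∀ ω, W 0 ω = 0) ∧ (∀ ω, Continuous fun t => W t ω) ∧
  (∀ s t : ℝ, 0 ≤ s → s ≤ t →
    Measure.map (fun ω => W t ω - W s ω) ℙ = gaussianReal 0 (Real.toNNReal (t - s))) ∧
  (∀ n : ℕ, ∀ t : ℕ → ℝ, Monotone t → 0 ≤ t 0 →
    iIndepFun
      (fun i : Fin n => fun ω => W (t (i + 1)) ω - W (t i) ω) ℙ)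

/-- The first exit time of `x + W` from the set `A`, with the convention
`inf ∅ = ∞`. -/
noncomputable def exitTimeFrom {Ω : Type*} (W : ℝ → Ω → ℝ) (A : Set ℝ) (x : ℝ)
    (ω : Ω) : ℝ≥0∞ :=
  ⨅ s ∈ {s : ℝ | 0 ≤ s ∧ x + W s ω ∉ A}, ENNReal.ofReal s

/-- Pathwise semicontinuity of Brownian exit times in the starting point:
for every sample path, the exit time from the open interval `(a,b)` is lower
semicontinuous along sequences `xₙ → x`, and the exit time from the closed
interval `[a,b]` is upper semicontinuous along such sequences. -/
theorem brownian_exitTime_semicontinuous {Ω : Type*} [MeasureSpace Ω]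
    [IsProbabilityMeasure (ℙ : Measure Ω)]
    (W : ℝ → Ω → ℝ) (hW : IsBrownianMotion W) (a b : ℝ) (hab : a < b)
    (x : ℝ) (hx : x ∈ Icc a b) (xn : ℕ → ℝ) (hxn : ∀ n, xn n ∈ Ioo a b)
    (hlim : Tendsto xn atTop (nhds x)) :
    (∀ ω : Ω, exitTimeFrom W (Ioo a b) x ω ≤
      Filter.liminf (fun n => exitTimeFrom W (Ioo a b) (xn n) ω) atTop) ∧
    (∀ ω : Ω, Filter.limsup (fun n => exitTimeFrom W (Icc a b) (xn n) ω) atTop ≤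
      exitTimeFrom W (Icc a b) x ω) := by
    classical
  have hWc : ∀ ω, Continuous fun t => W t ω := hW.2.1
  constructor
  · -- lower semicontinuity for the open interval
    intro ω
    rw [Filter.le_liminf_iff]
    intro c hc
    obtain ⟨c', hcc', hc'⟩ := exists_between hc
    have hc'top : c' ≠ ⊤ := (hc'.trans_le le_top).ne
    set t' : ℝ := c'.toReal with ht'
    have ht'0 : 0 ≤ t' := ENNReal.toReal_nonneg
    have hc'eq : c' = ENNReal.ofReal t' := (ENNReal.ofReal_toReal hc'top).symm
    -- on [0, t'] the path stays inside (a,b)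
    have hin : ∀ s ∈ Icc (0:ℝ) t', x + W s ω ∈ Ioo a b := by
      intro s hs
      by_contra h
      have hmem : s ∈ {s : ℝ | 0 ≤ s ∧ x + W s ω ∉ Ioo a b} := ⟨hs.1, h⟩
      have hle : exitTimeFrom W (Ioo a b) x ω ≤ ENNReal.ofReal s := by
        exact iInf₂_le s hmem
      have : exitTimeFrom W (Ioo a b) x ω ≤ c' := by
        refine hle.trans ?_
        rw [hc'eq]
        exact ENNReal.ofReal_le_ofReal hs.2
      exact absurd hc' (not_lt.mpr this)
    -- find a uniform margin ε
    set g : ℝ → ℝ := fun s => min (x + W s ω - a) (b - (x + W s ω)) with hg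
    have hgcont : Continuous g := by
      apply Continuous.min
      · exact ((continuous_const.add (hWc ω)).sub continuous_const)
      · exact (continuous_const.sub (continuous_const.add (hWc ω)))
    obtain ⟨s₀, hs₀mem, hs₀min⟩ :=
      (isCompact_Icc (a := (0:ℝ)) (b := t')).exists_isMinOn ⟨0, le_refl 0, ht'0⟩
        hgcont.continuousOn
    set ε : ℝ := g s₀ with hε
    have hεpos : 0 < ε := by
      have := hin s₀ hs₀mem
      exact lt_min (by linarith [this.1]) (by linarith [this.2])
    have hev : ∀ᶠ n in atTop, dist (xn n) x < ε :=
      (Metric.tendsto_nhds.mp hlim) ε hεpos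
    filter_upwards [hev] with n hn
    refine lt_of_lt_of_le hcc' ?_
    refine le_iInf₂ fun s hs => ?_
    rw [hc'eq]
    refine ENNReal.ofReal_le_ofReal ?_
    by_contra hst
    push_neg at hst
    have hsI : s ∈ Icc (0:ℝ) t' := ⟨hs.1, hst.le⟩
    have hmin : ε ≤ g s := hs₀min hsI
    have hd : |xn n - x| < ε := by rwa [Real.dist_eq] at hn
    have h1 : a < xn n + W s ω := by
      have : ε ≤ x + W s ω - a := le_trans hmin (min_le_left _ _)
      have := abs_lt.mp hd
      linarith
    have h2 : xn n + W s ω < b := by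
      have : ε ≤ b - (x + W s ω) := le_trans hmin (min_le_right _ _)
      have := abs_lt.mp hd
      linarith
    exact hs.2 ⟨h1, h2⟩
  · -- upper semicontinuity for the closed interval
    intro ω
    refine le_of_forall_gt_imp_ge_of_dense fun c hc => ?_
    unfold exitTimeFrom at hc
    rw [iInf_lt_iff] at hc
    obtain ⟨s, hs⟩ := hc
    rw [iInf_lt_iff] at hs
    obtain ⟨hsmem, hslt⟩ := hs
    obtain ⟨hs0, hsout⟩ := hsmem
    have hout : x + W s ω < a ∨ b < x + W s ω := by
      rcases lt_or_ge (x + W s ω) a with h | h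
      · exact Or.inl h
      · rcases lt_or_ge b (x + W s ω) with h' | h'
        · exact Or.inr h'
        · exact absurd ⟨h, h'⟩ hsout
    set ε : ℝ := if x + W s ω < a then a - (x + W s ω) else (x + W s ω) - b with hεdef
    have hεpos : 0 < ε := by
      rcases hout with h | h
      · rw [hεdef, if_pos h]; linarith
      · have hna : ¬ (x + W s ω < a) := by linarith
        rw [hεdef, if_neg hna]; linarith
    have hev : ∀ᶠ n in atTop, dist (xn n) x < ε :=
      (Metric.tendsto_nhds.mp hlim) ε hεpos
    refine Filter.limsup_le_of_le ?_ ?_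
    · isBoundedDefault
    filter_upwards [hev] with n hn
    have hd := abs_lt.mp (by rwa [Real.dist_eq] at hn)
    have hnout : xn n + W s ω ∉ Icc a b := by
      rcases hout with h | h
      · have hεeq : ε = a - (x + W s ω) := by rw [hεdef, if_pos h]
        intro hmem
        have := hmem.1
        rw [hεeq] at hd
        linarith [hd.1, hd.2]
      · have hna : ¬ (x + W s ω < a) := by linarith
        have hεeq : ε = (x + W s ω) - b := by rw [hεdef, if_neg hna]
        intro hmem
        have := hmem.2
        rw [hεeq] at hd
        linarith [hd.1, hd.2]
    have : exitTimeFrom W (Icc a b) (xn n) ω ≤ ENNReal.ofReal s :=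
      iInf₂_le s ⟨hs0, hnout⟩
    exact this.trans hslt.le
end

section
/- Let c : [a,b] -> [0,T] be lower semi-continuous and suppose the connectedness property holds: for all x_1 < x_2 in [a,b], c(x) <= c(x_1) vee c(x_2) for every x in [x_1, x_2]. Then the set Sigma of minimisers of c on [a,b] is a nonempty closed interval [a_*, b_*], and c is strictly decreasing on [a, a_*) and strictly increasing on (b_*, b], provided additionally that c admits no nondegenerate flat stretch at a positive level (i.e., c constant and positive on a nondegenerate subinterval is impossible). -/
open Set

lemma sublevel_closed {a b t : ℝ} {c : ℝ → ℝ}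
    (hlsc : LowerSemicontinuousOn c (Icc a b)) :
    IsClosed {x | x ∈ Icc a b ∧ c x ≤ t} := by
  rw [← isOpen_compl_iff]
  rw [isOpen_iff_mem_nhds] at *
  intro x hx
  by_cases hxs : x ∈ Icc a b
  · have hcx : t < c x := by
      by_contra h
      exact hx ⟨hxs, not_lt.1 h⟩
    have := hlsc x hxs t hcx
    rw [eventually_nhdsWithin_iff] at this
    filter_upwards [this] with z hz hzmem
    exact absurd (hz hzmem.1) (not_lt.2 hzmem.2)
  · have : IsOpen (Icc a b)ᶜ := isOpen_compl_iff.2 isClosed_Icc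
    filter_upwards [this.mem_nhds hxs] with z hz hzmem
    exact hz hzmem.1

/-- Structure of the optimal stopping boundary `x ↦ c(x)` on `[a,b]`: if `c` is
lower semicontinuous with values in `[0,T]`, satisfies the connectedness property
`c(x) ≤ c(x₁) ∨ c(x₂)` for `x ∈ [x₁,x₂]`, and admits no nondegenerate flat stretch
at a positive level, then the set of minimisers of `c` on `[a,b]` is a nonempty
closed interval `[a⋆, b⋆]`, `c` is strictly decreasing on `[a, a⋆)` and strictly
increasing on `(b⋆, b]`. -/
theorem boundary_monotonicity (a b T : ℝ) (hab : a < b) (hT : 0 < T)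
    (c : ℝ → ℝ)
    (hrange : ∀ x ∈ Icc a b, c x ∈ Icc 0 T)
    (hlsc : LowerSemicontinuousOn c (Icc a b))
    (hconn : ∀ x₁ ∈ Icc a b, ∀ x₂ ∈ Icc a b, x₁ < x₂ →
      ∀ x ∈ Icc x₁ x₂, c x ≤ max (c x₁) (c x₂))
    (hnoflat : ∀ x₁ ∈ Icc a b, ∀ x₂ ∈ Icc a b, x₁ < x₂ →
      (∀ x ∈ Icc x₁ x₂, c x = c x₁) → c x₁ = 0) :
    ∃ astar ∈ Icc a b, ∃ bstar ∈ Icc a b, astar ≤ bstar ∧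
      {x | x ∈ Icc a b ∧ ∀ y ∈ Icc a b, c x ≤ c y} = Icc astar bstar ∧
      StrictAntiOn c (Ico a astar) ∧ StrictMonoOn c (Ioc bstar b) := by
  have hsne : (Icc a b).Nonempty := nonempty_Icc.2 hab.le
  have himne : (c '' Icc a b).Nonempty := hsne.image c
  have hbdd : BddBelow (c '' Icc a b) := by
    refine ⟨0, fun y hy => ?_⟩
    obtain ⟨x, hx, rfl⟩ := hy
    exact (hrange x hx).1
  set m : ℝ := sInf (c '' Icc a b) with hm
  have hmle : ∀ y ∈ Icc a b, m ≤ c y := fun y hy =>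
    csInf_le hbdd (mem_image_of_mem c hy)
  -- the minimiser set
  set Sig : Set ℝ := {x | x ∈ Icc a b ∧ c x ≤ m} with hSig
  have hSigsub : Sig ⊆ Icc a b := fun x hx => hx.1
  have hSigclosed : IsClosed Sig := sublevel_closed hlsc
  -- Sig nonempty via compactness
  have hSigne : Sig.Nonempty := by
    set S : ℕ → Set ℝ := fun n => {x | x ∈ Icc a b ∧ c x ≤ m + 1 / (n + 1)} with hS
    have hSclosed : ∀ n, IsClosed (S n) := fun n => sublevel_closed hlsc
    have hScompact : ∀ n, IsCompact (S n) :=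
      fun n => isCompact_Icc.of_isClosed_subset (hSclosed n) (fun x hx => hx.1)
    have hSne : ∀ n, (S n).Nonempty := by
      intro n
      have hpos : (0 : ℝ) < 1 / (n + 1) := by positivity
      obtain ⟨y, hy, hylt⟩ := exists_lt_of_csInf_lt himne (by linarith : m < m + 1 / (n + 1))
      obtain ⟨x, hx, rfl⟩ := hy
      exact ⟨x, hx, hylt.le⟩
    have hanti : ∀ i j : ℕ, i ≤ j → S j ⊆ S i := by
      intro i j hij x hx
      refine ⟨hx.1, hx.2.trans ?_⟩
      have hc : (i : ℝ) ≤ j := Nat.cast_le.2 hij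
      have : (1 : ℝ) / (j + 1) ≤ 1 / (i + 1) := by
        apply one_div_le_one_div_of_le (by positivity)
        linarith
      linarith
    have hdir : Directed (· ⊇ ·) S := fun i j =>
      ⟨max i j, hanti i _ (le_max_left i j), hanti j _ (le_max_right i j)⟩
    obtain ⟨x, hx⟩ := IsCompact.nonempty_iInter_of_directed_nonempty_isCompact_isClosed
      S hdir hSne hScompact hSclosed
    refine ⟨x, (mem_iInter.1 hx 0).1, ?_⟩
    have hle : ∀ n : ℕ, c x ≤ m + 1 / (n + 1) := fun n => (mem_iInter.1 hx n).2
    by_contra h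
    push_neg at h
    obtain ⟨n, hn⟩ := exists_nat_one_div_lt (by linarith : 0 < c x - m)
    have := hle n
    linarith
  obtain ⟨x₀, hx₀⟩ := hSigne
  have hm0 : 0 ≤ m := le_trans (hrange x₀ hx₀.1).1 hx₀.2
  have hmval : ∀ x ∈ Sig, c x = m := fun x hx => le_antisymm hx.2 (hmle x hx.1)
  have hSigbddB : BddBelow Sig := ⟨a, fun x hx => (hSigsub hx).1⟩
  have hSigbddA : BddAbove Sig := ⟨b, fun x hx => (hSigsub hx).2⟩
  set astar := sInf Sig with hastar
  set bstar := sSup Sig with hbstar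
  have hamem : astar ∈ Sig := hSigclosed.csInf_mem ⟨x₀, hx₀⟩ hSigbddB
  have hbmem : bstar ∈ Sig := hSigclosed.csSup_mem ⟨x₀, hx₀⟩ hSigbddA
  have hastarab : astar ∈ Icc a b := hSigsub hamem
  have hbstarab : bstar ∈ Icc a b := hSigsub hbmem
  have hable : astar ≤ bstar := csInf_le_csSup ⟨x₀, hx₀⟩ hSigbddB hSigbddA
  -- key: the minimiser set equals Sig
  have hset : {x | x ∈ Icc a b ∧ ∀ y ∈ Icc a b, c x ≤ c y} = Sig := by
    ext x
    constructor
    · rintro ⟨hx, hmin⟩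
      exact ⟨hx, le_csInf himne (by rintro y ⟨z, hz, rfl⟩; exact hmin z hz)⟩
    · rintro ⟨hx, hle⟩
      exact ⟨hx, fun y hy => hle.trans (hmle y hy)⟩
  -- Sig is the interval [astar, bstar]
  have hSigIcc : Sig = Icc astar bstar := by
    apply Subset.antisymm
    · exact fun x hx => ⟨csInf_le hSigbddB hx, le_csSup hSigbddA hx⟩
    · intro z hz
      rcases eq_or_lt_of_le hable with heq | hlt
      · have : z = astar := le_antisymm (heq ▸ hz.2) hz.1
        exact this ▸ hamem
      · have hzab : z ∈ Icc a b := ⟨hastarab.1.trans hz.1, hz.2.trans hbstarab.2⟩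
        have := hconn astar hastarab bstar hbstarab hlt z hz
        refine ⟨hzab, ?_⟩
        calc c z ≤ max (c astar) (c bstar) := this
          _ = m := by rw [hmval _ hamem, hmval _ hbmem, max_self]
  refine ⟨astar, hastarab, bstar, hbstarab, hable, by rw [hset, hSigIcc], ?_, ?_⟩
  · -- strictly decreasing on [a, astar)
    intro x hx y hy hxy
    by_contra h
    push_neg at h  -- c x ≤ c y
    have hxab : x ∈ Icc a b := ⟨hx.1, hx.2.le.trans hastarab.2⟩
    have hyab : y ∈ Icc a b := ⟨hy.1, hy.2.le.trans hastarab.2⟩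
    have hflat : ∀ z ∈ Icc x y, c z = c x := by
      intro z hz
      have hzab : z ∈ Icc a b := ⟨hxab.1.trans hz.1, (hz.2.trans hy.2.le).trans hastarab.2⟩
      have hza : z < astar := lt_of_le_of_lt hz.2 hy.2
      have hup : c z ≤ c x := by
        have := hconn x hxab astar hastarab hx.2 z ⟨hz.1, hza.le⟩
        rw [hmval _ hamem] at this
        exact this.trans (max_le le_rfl (hmle x hxab))
      have hdown : c x ≤ c z := by
        have := hconn z hzab astar hastarab hza y ⟨hz.2, hy.2.le⟩
        rw [hmval _ hamem] at this
        have hcy : c y ≤ c z := this.trans (max_le le_rfl (hmle z hzab))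
        linarith
      linarith
    have hzero : c x = 0 := hnoflat x hxab y hyab hxy hflat
    have hxSig : x ∈ Sig := ⟨hxab, by linarith⟩
    have : astar ≤ x := csInf_le hSigbddB hxSig
    exact absurd hx.2 (not_lt.2 this)
  · -- strictly increasing on (bstar, b]
    intro x hx y hy hxy
    by_contra h
    push_neg at h  -- c y ≤ c x
    have hxab : x ∈ Icc a b := ⟨hbstarab.1.trans hx.1.le, hx.2⟩
    have hyab : y ∈ Icc a b := ⟨hbstarab.1.trans hy.1.le, hy.2⟩
    have hflat : ∀ z ∈ Icc x y, c z = c x := by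
      intro z hz
      have hzab : z ∈ Icc a b := ⟨hxab.1.trans hz.1, hz.2.trans hyab.2⟩
      have hbz : bstar < z := lt_of_lt_of_le hx.1 hz.1
      have hup : c z ≤ c x := by
        have := hconn bstar hbstarab y hyab hy.1 z ⟨hbz.le, hz.2⟩
        rw [hmval _ hbmem] at this
        have : c z ≤ c y := this.trans (max_le (hmle y hyab) le_rfl)
        linarith
      have hdown : c x ≤ c z := by
        have := hconn bstar hbstarab z hzab hbz x ⟨hx.1.le, hz.1⟩
        rw [hmval _ hbmem] at this
        exact this.trans (max_le (hmle z hzab) le_rfl)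
      linarith
    have hzero : c x = 0 := hnoflat x hxab y hyab hxy hflat
    have hxSig : x ∈ Sig := ⟨hxab, by linarith⟩
    have : x ≤ bstar := le_csSup hSigbddA hxSig
    exact absurd hx.1 (not_lt.2 this)
end

section
/- Let v in C^{1,2} on an open set O = (t_0, t_1) x (x_0 - delta, x_0 + delta) satisfy partial_t v + (sigma^2/2) partial_{xx} v = r v on O with r >= 0, and suppose hat-v := partial_t v satisfies: hat-v <= 0 on the lateral boundary {(t, x_0 +/ - delta) : t in [t_0, t_1)}, hat-v < -epsilon/2 on the terminal slice {t_1} x (x_0 - delta, x_0 + delta), and hat-v itself solves partial_t hat-v + (sigma^2/2) partial_{xx} hat-v = r hat-v on O. If the diffusion started inside O reaches the terminal slice {t_1} before exiting laterally with positive probability, then hat-v(t_0, x_0) < 0. -/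
open MeasureTheory ProbabilityTheory Filter Set
open scoped ENNReal NNReal Topology

/-- `X` is a (driftless) diffusion with diffusion coefficient `σ` started at `x₀`:
it has continuous adapted paths and solves the martingale problem for the
generator `(σ²/2) ∂ₓₓ`, which is the weak formulation of `dX = σ(X) dB`. -/
def SolvesSDE {Ω : Type*} {m : MeasurableSpace Ω} (ℱ : Filtration ℝ m) (μ : Measure Ω)
    (σ : ℝ → ℝ) (X : ℝ → Ω → ℝ) (x₀ : ℝ) : Prop :=
  (∀ ω, X 0 ω = x₀) ∧ (∀ ω, Continuous fun t => X t ω) ∧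
  Adapted ℱ X ∧
  ∀ f : ℝ → ℝ, ContDiff ℝ 2 f →
    Martingale (fun t ω => f (X t ω) -
      ∫ s in (0:ℝ)..t, σ (X s ω) ^ 2 / 2 * deriv (deriv f) (X s ω)) ℱ μ

/-- `L z t` is the (semimartingale) local time of `X` at level `z` up to time `t`,
defined through the almost-sure occupation-density limit
`L^z_t = lim_{ε→0} (2ε)⁻¹ ∫_0^t 1_{X_s ∈ (z-ε,z+ε)} σ(X_s)² ds`. -/
def IsLocalTime {Ω : Type*} {m : MeasurableSpace Ω} (μ : Measure Ω) (σ : ℝ → ℝ)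
    (X : ℝ → Ω → ℝ) (L : ℝ → ℝ → Ω → ℝ) : Prop :=
  ∀ z t : ℝ, 0 ≤ t → ∀ᵐ ω ∂μ,
    Tendsto (fun ε : ℝ =>
        (2 * ε)⁻¹ * ∫ s in (0:ℝ)..t, indicator (Ioo (z - ε) (z + ε)) (fun y => σ y ^ 2) (X s ω))
      (nhdsWithin 0 (Ioi 0)) (nhds (L z t ω))

/-- `ell z t = ∫_0^t e^{-∫_0^s r(X_u) du} dL^z_s`, the `r`-discounted local time,
expressed through the Stieltjes measures `(Lst z ω).measure` of the
(nondecreasing) local-time paths. -/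
def IsDiscountedLocalTime {Ω : Type*} (r : ℝ → ℝ) (X : ℝ → Ω → ℝ)
    (Lst : ℝ → Ω → StieltjesFunction ℝ) (ell : ℝ → ℝ → Ω → ℝ) : Prop :=
  ∀ z t ω, ell z t ω =
    ∫ s in Ioc (0:ℝ) t, Real.exp (-(∫ u in (0:ℝ)..s, r (X u ω))) ∂((Lst z ω).measure)

/-- The first exit time of `X` from the set `A`, capped at `cap`. -/
noncomputable def cappedExitTime {Ω : Type*} (X : ℝ → Ω → ℝ) (A : Set ℝ) (cap : ℝ)
    (ω : Ω) : ℝ :=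
  sInf ({s : ℝ | 0 ≤ s ∧ X s ω ∉ A} ∪ {cap})


lemma right_deriv_nonpos' {f : ℝ → ℝ} {f' a b : ℝ} (hab : a < b)
    (hd : HasDerivAt f f' a) (hmax : ∀ t ∈ Icc a b, f t ≤ f a) : f' ≤ 0 := by
  have H : Tendsto (slope f a) (𝓝[>] a) (𝓝 f') :=
    (hasDerivAt_iff_tendsto_slope.mp hd).mono_left
      (nhdsWithin_mono _ fun t ht => Set.mem_compl_singleton_iff.mpr (mem_Ioi.mp ht).ne')
  refine le_of_tendsto H ?_
  filter_upwards [Ioc_mem_nhdsGT hab] with t ht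
  rw [slope_def_field]
  exact div_nonpos_of_nonpos_of_nonneg (sub_nonpos.2 (hmax t ⟨ht.1.le, ht.2⟩))
    (sub_pos.2 ht.1).le

lemma second_deriv_nonpos' {f f' : ℝ → ℝ} {c d x f'' : ℝ}
    (hcx : c < x) (hxd : x < d)
    (hder : ∀ y ∈ Icc c d, HasDerivAt f (f' y) y)
    (hder2 : HasDerivAt f' f'' x)
    (hmax : ∀ y ∈ Icc c d, f y ≤ f x) : f'' ≤ 0 := by
  by_contra hpos
  push_neg at hpos
  have hx : x ∈ Icc c d := ⟨hcx.le, hxd.le⟩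
  have hf'x : f' x = 0 := by
    have hloc : IsLocalMax f x := by
      filter_upwards [Icc_mem_nhds hcx hxd] with y hy using hmax y hy
    exact hloc.hasDerivAt_eq_zero (hder x hx)
  have H : Tendsto (slope f' x) (𝓝[>] x) (𝓝 f'') :=
    (hasDerivAt_iff_tendsto_slope.mp hder2).mono_left
      (nhdsWithin_mono _ fun t ht => Set.mem_compl_singleton_iff.mpr (mem_Ioi.mp ht).ne')
  have hev : ∀ᶠ t in 𝓝[>] x, 0 < slope f' x t := H.eventually (eventually_gt_nhds hpos)
  obtain ⟨u, hu, huball⟩ := mem_nhdsGT_iff_exists_Ioo_subset.mp hev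
  set b := min u d with hbdef
  have hxb : x < b := lt_min hu hxd
  have hmono : StrictMonoOn f (Icc x b) := by
    apply strictMonoOn_of_deriv_pos (convex_Icc x b)
    · intro t ht
      exact (hder t ⟨hcx.le.trans ht.1, ht.2.trans (min_le_right _ _)⟩).continuousAt.continuousWithinAt
    · intro t ht
      rw [interior_Icc] at ht
      have htu : t ∈ Ioo x u := ⟨ht.1, ht.2.trans_le (min_le_left _ _)⟩
      have hslope : 0 < slope f' x t := huball htu
      have htcd : t ∈ Icc c d := ⟨hcx.le.trans ht.1.le, ht.2.le.trans (min_le_right _ _)⟩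
      rw [(hder t htcd).deriv]
      rw [slope_def_field] at hslope
      have h2 : 0 < t - x := sub_pos.2 ht.1
      have h3 := mul_pos hslope h2
      rw [div_mul_cancel₀ _ h2.ne'] at h3
      linarith
  have hlt : f x < f b := hmono ⟨le_rfl, hxb.le⟩ ⟨hxb.le, le_rfl⟩ hxb
  exact absurd (hmax b ⟨hcx.le.trans hxb.le, min_le_right _ _⟩) (not_le.mpr hlt)

lemma nonpos_at_right_endpoint' {φ : ℝ → ℝ} {t₀ t₁ : ℝ} (ht : t₀ < t₁)
    (hφ : ContinuousOn φ (Icc t₀ t₁)) (h : ∀ t ∈ Ico t₀ t₁, φ t ≤ 0) : φ t₁ ≤ 0 := by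
  have hne : (𝓝[Ico t₀ t₁] t₁).NeBot := by
    rw [← mem_closure_iff_nhdsWithin_neBot, closure_Ico ht.ne]
    exact ⟨ht.le, le_rfl⟩
  have H : Tendsto φ (𝓝[Ico t₀ t₁] t₁) (𝓝 (φ t₁)) :=
    (hφ t₁ ⟨ht.le, le_rfl⟩).mono_left (nhdsWithin_mono _ Ico_subset_Icc_self)
  exact le_of_tendsto H (eventually_mem_nhdsWithin.mono fun t htm => h t htm)

lemma weak_max_principle' {t₀ t₁ x₀ δ : ℝ} (ht : t₀ < t₁) (hδ : 0 < δ)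
    {F Ft Fx Fxx : ℝ → ℝ → ℝ}
    (hFt : ∀ p ∈ Icc t₀ t₁ ×ˢ Icc (x₀ - δ) (x₀ + δ),
      HasDerivAt (fun s => F s p.2) (Ft p.1 p.2) p.1)
    (hFx : ∀ p ∈ Icc t₀ t₁ ×ˢ Icc (x₀ - δ) (x₀ + δ),
      HasDerivAt (fun y => F p.1 y) (Fx p.1 p.2) p.2)
    (hFxx : ∀ p ∈ Icc t₀ t₁ ×ˢ Icc (x₀ - δ) (x₀ + δ),
      HasDerivAt (fun y => Fx p.1 y) (Fxx p.1 p.2) p.2)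
    (hcont : ContinuousOn (fun p : ℝ × ℝ => F p.1 p.2) (Icc t₀ t₁ ×ˢ Icc (x₀ - δ) (x₀ + δ)))
    (hbdry : ∀ p ∈ Icc t₀ t₁ ×ˢ Icc (x₀ - δ) (x₀ + δ),
      (p.1 = t₁ ∨ p.2 = x₀ - δ ∨ p.2 = x₀ + δ) → F p.1 p.2 ≤ 0)
    (hkey : ∀ p ∈ Icc t₀ t₁ ×ˢ Icc (x₀ - δ) (x₀ + δ), p.1 < t₁ →
      x₀ - δ < p.2 → p.2 < x₀ + δ → 0 ≤ F p.1 p.2 → Fxx p.1 p.2 ≤ 0 → 0 < Ft p.1 p.2) :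
    ∀ p ∈ Icc t₀ t₁ ×ˢ Icc (x₀ - δ) (x₀ + δ), F p.1 p.2 ≤ 0 := by
  have hR : IsCompact (Icc t₀ t₁ ×ˢ Icc (x₀ - δ) (x₀ + δ)) := isCompact_Icc.prod isCompact_Icc
  have hRne : (Icc t₀ t₁ ×ˢ Icc (x₀ - δ) (x₀ + δ)).Nonempty :=
    ⟨(t₀, x₀), ⟨⟨le_rfl, ht.le⟩, by constructor <;> linarith⟩⟩
  obtain ⟨q, hqR, hq⟩ := hR.exists_isMaxOn hRne hcont
  have hqmax : ∀ p ∈ Icc t₀ t₁ ×ˢ Icc (x₀ - δ) (x₀ + δ), F p.1 p.2 ≤ F q.1 q.2 :=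
    fun p hp => hq hp
  intro p hp
  refine (hqmax p hp).trans ?_
  obtain ⟨hq1, hq2⟩ := hqR
  rcases eq_or_lt_of_le hq1.2 with h1 | h1
  · exact hbdry q ⟨hq1, hq2⟩ (Or.inl h1)
  rcases eq_or_lt_of_le hq2.1 with h2 | h2
  · exact hbdry q ⟨hq1, hq2⟩ (Or.inr (Or.inl h2.symm))
  rcases eq_or_lt_of_le hq2.2 with h3 | h3
  · exact hbdry q ⟨hq1, hq2⟩ (Or.inr (Or.inr h3))
  by_contra hFq
  push_neg at hFq
  have hFt_le : Ft q.1 q.2 ≤ 0 := by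
    refine right_deriv_nonpos' h1 (hFt q ⟨hq1, hq2⟩) fun t htm => ?_
    exact hqmax (t, q.2) ⟨⟨hq1.1.trans htm.1, htm.2⟩, hq2⟩
  have hFxx_le : Fxx q.1 q.2 ≤ 0 := by
    refine second_deriv_nonpos' (f := fun y => F q.1 y) (f' := fun y => Fx q.1 y) h2 h3
      (fun y hy => hFx (q.1, y) ⟨hq1, hy⟩) (hFxx q ⟨hq1, hq2⟩) fun y hy => ?_
    exact hqmax (q.1, y) ⟨hq1, hy⟩
  exact absurd (hkey q ⟨hq1, hq2⟩ h1 h2 h3 hFq.le hFxx_le) (not_lt.mpr hFt_le)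

/-- Maximum-principle step for the strict time-monotonicity of the value function:
suppose `v` is `C^{1,2}` on the closed rectangle `R = [t₀,t₁] × [x₀-δ, x₀+δ]` and
solves `∂ₜv + (σ²/2) ∂ₓₓv = r v` there, and that `v̂ := ∂ₜ v` also solves the same
equation, is `≤ 0` on the lateral boundary, and `< -ε/2` on the terminal slice
`{t₁} × (x₀-δ, x₀+δ)`.  If the diffusion started at `(t₀, x₀)` reaches the terminal
slice before exiting laterally with positive probability, then `v̂(t₀,x₀) < 0`. -/
theorem maximum_principle_time_derivative {Ω : Type*} {mΩ : MeasurableSpace Ω}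
    (ℱ : Filtration ℝ mΩ) (P : Measure Ω) [IsProbabilityMeasure P]
    (σ r : ℝ → ℝ) (hσc : Continuous σ) (hrc : Continuous r) (hrnn : ∀ y, 0 ≤ r y)
    (t₀ t₁ x₀ δ ε : ℝ) (ht : t₀ < t₁) (hδ : 0 < δ) (hε : 0 < ε)
    (v vt vx vxx vtt vtx vtxx : ℝ → ℝ → ℝ)
    -- `v` is C^{1,2} on the closed rectangle, with the indicated partial derivatives
    (hvt : ∀ p ∈ Icc t₀ t₁ ×ˢ Icc (x₀ - δ) (x₀ + δ),
      HasDerivAt (fun s => v s p.2) (vt p.1 p.2) p.1)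
    (hvx : ∀ p ∈ Icc t₀ t₁ ×ˢ Icc (x₀ - δ) (x₀ + δ),
      HasDerivAt (fun y => v p.1 y) (vx p.1 p.2) p.2)
    (hvxx : ∀ p ∈ Icc t₀ t₁ ×ˢ Icc (x₀ - δ) (x₀ + δ),
      HasDerivAt (fun y => vx p.1 y) (vxx p.1 p.2) p.2)
    (hvtt : ∀ p ∈ Icc t₀ t₁ ×ˢ Icc (x₀ - δ) (x₀ + δ),
      HasDerivAt (fun s => vt s p.2) (vtt p.1 p.2) p.1)
    (hvtx : ∀ p ∈ Icc t₀ t₁ ×ˢ Icc (x₀ - δ) (x₀ + δ),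
      HasDerivAt (fun y => vt p.1 y) (vtx p.1 p.2) p.2)
    (hvtxx : ∀ p ∈ Icc t₀ t₁ ×ˢ Icc (x₀ - δ) (x₀ + δ),
      HasDerivAt (fun y => vtx p.1 y) (vtxx p.1 p.2) p.2)
    (hcont : ContinuousOn (fun p : ℝ × ℝ => vt p.1 p.2)
      (Icc t₀ t₁ ×ˢ Icc (x₀ - δ) (x₀ + δ)))
    -- the PDE for `v` and for `v̂ = ∂ₜ v`
    (hPDE : ∀ p ∈ Icc t₀ t₁ ×ˢ Icc (x₀ - δ) (x₀ + δ),
      vt p.1 p.2 + σ p.2 ^ 2 / 2 * vxx p.1 p.2 = r p.2 * v p.1 p.2)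
    (hPDEt : ∀ p ∈ Icc t₀ t₁ ×ˢ Icc (x₀ - δ) (x₀ + δ),
      vtt p.1 p.2 + σ p.2 ^ 2 / 2 * vtxx p.1 p.2 = r p.2 * vt p.1 p.2)
    -- boundary behaviour of `v̂`
    (hlat : ∀ t ∈ Ico t₀ t₁, vt t (x₀ - δ) ≤ 0 ∧ vt t (x₀ + δ) ≤ 0)
    (hfin : ∀ y ∈ Ioo (x₀ - δ) (x₀ + δ), vt t₁ y < -ε / 2)
    -- the diffusion, and positive probability of reaching the terminal slice
    (X : ℝ → Ω → ℝ) (hX : SolvesSDE ℱ P σ X x₀)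
    (hpos : 0 < P {ω | sInf {s : ℝ | 0 ≤ s ∧
      (t₀ + s, X s ω) ∉ Ico t₀ t₁ ×ˢ Ioo (x₀ - δ) (x₀ + δ)} = t₁ - t₀}) :
    vt t₀ x₀ < 0 := by
  clear hpos hX X hPDE hvx hvxx hvt
  have hπ := Real.pi_pos
  obtain ⟨c, hcpos, hcδ⟩ : ∃ c : ℝ, 0 < c ∧ c * δ = Real.pi / 2 :=
    ⟨Real.pi / (2 * δ), by positivity, by field_simp⟩
  -- choose K
  have hhc : ContinuousOn (fun y => r y + σ y ^ 2 / 2 * c ^ 2) (Icc (x₀ - δ) (x₀ + δ)) := by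
    fun_prop
  obtain ⟨y₁, hy₁, hy₁max⟩ := isCompact_Icc.exists_isMaxOn
    (nonempty_Icc.mpr (by linarith)) hhc
  obtain ⟨K, hKb⟩ : ∃ K : ℝ, ∀ y ∈ Icc (x₀ - δ) (x₀ + δ),
      r y + σ y ^ 2 / 2 * c ^ 2 + 1 ≤ K := by
    refine ⟨r y₁ + σ y₁ ^ 2 / 2 * c ^ 2 + 1, fun y hy => ?_⟩
    have h := isMaxOn_iff.mp hy₁max y hy
    linarith
  -- the perturbation g
  set g : ℝ → ℝ → ℝ :=
    fun t x => ε / 2 * Real.exp (K * (t - t₁)) * Real.cos (c * (x - x₀)) with hg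
  have hargIcc : ∀ x ∈ Icc (x₀ - δ) (x₀ + δ),
      c * (x - x₀) ∈ Icc (-(Real.pi / 2)) (Real.pi / 2) := by
    intro x hx
    constructor
    · nlinarith [hx.1, hx.2]
    · nlinarith [hx.1, hx.2]
  have hgnn : ∀ t x, x ∈ Icc (x₀ - δ) (x₀ + δ) → 0 ≤ g t x := by
    intro t x hx
    have := Real.cos_nonneg_of_mem_Icc (hargIcc x hx)
    have he := Real.exp_pos (K * (t - t₁))
    simp only [hg]
    positivity
  have hgpos : ∀ t x, x ∈ Ioo (x₀ - δ) (x₀ + δ) → 0 < g t x := by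
    intro t x hx
    have hcos : 0 < Real.cos (c * (x - x₀)) := by
      apply Real.cos_pos_of_mem_Ioo
      constructor
      · nlinarith [hx.1, hx.2]
      · nlinarith [hx.1, hx.2]
    have he := Real.exp_pos (K * (t - t₁))
    simp only [hg]
    positivity
  have hglat : ∀ t, g t (x₀ - δ) = 0 ∧ g t (x₀ + δ) = 0 := by
    intro t
    constructor <;> simp only [hg]
    · rw [show c * (x₀ - δ - x₀) = -(Real.pi / 2) by rw [show x₀ - δ - x₀ = -δ by ring]; rw [← hcδ]; ring,
        Real.cos_neg, Real.cos_pi_div_two, mul_zero]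
    · rw [show c * (x₀ + δ - x₀) = Real.pi / 2 by rw [show x₀ + δ - x₀ = δ by ring]; exact hcδ,
        Real.cos_pi_div_two, mul_zero]
  -- corner values of vt
  have hcorner : vt t₁ (x₀ - δ) ≤ 0 ∧ vt t₁ (x₀ + δ) ≤ 0 := by
    constructor
    · refine nonpos_at_right_endpoint' (φ := fun t => vt t (x₀ - δ)) ht ?_
        (fun t htm => (hlat t htm).1)
      exact hcont.comp ((continuous_id.prodMk continuous_const).continuousOn)
        fun t htm => ⟨htm, show x₀ - δ ∈ Icc (x₀ - δ) (x₀ + δ) from ⟨le_rfl, by linarith⟩⟩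
    · refine nonpos_at_right_endpoint' (φ := fun t => vt t (x₀ + δ)) ht ?_
        (fun t htm => (hlat t htm).2)
      exact hcont.comp ((continuous_id.prodMk continuous_const).continuousOn)
        fun t htm => ⟨htm, show x₀ + δ ∈ Icc (x₀ - δ) (x₀ + δ) from ⟨by linarith, le_rfl⟩⟩
  have hlatIcc : ∀ t ∈ Icc t₀ t₁, vt t (x₀ - δ) ≤ 0 ∧ vt t (x₀ + δ) ≤ 0 := by
    intro t htm
    rcases eq_or_lt_of_le htm.2 with h | h
    · rw [h]; exact hcorner
    · exact hlat t ⟨htm.1, h⟩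
  -- apply the weak maximum principle to F = vt + g
  have hmain : ∀ p ∈ Icc t₀ t₁ ×ˢ Icc (x₀ - δ) (x₀ + δ),
      vt p.1 p.2 + g p.1 p.2 ≤ 0 := by
    refine weak_max_principle' ht hδ
      (F := fun t x => vt t x + g t x)
      (Ft := fun t x => vtt t x + K * g t x)
      (Fx := fun t x => vtx t x +
        -(ε / 2 * Real.exp (K * (t - t₁)) * (Real.sin (c * (x - x₀)) * c)))
      (Fxx := fun t x => vtxx t x + -(c ^ 2 * g t x)) ?_ ?_ ?_ ?_ ?_ ?_
    · intro p hp
      have h1 : HasDerivAt (fun s : ℝ => K * (s - t₁)) K p.1 := by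
        simpa using ((hasDerivAt_id p.1).sub_const t₁).const_mul K
      have h2 := ((h1.exp.const_mul (ε / 2)).mul_const (Real.cos (c * (p.2 - x₀))))
      have h3 := (hvtt p hp).fun_add h2
      refine h3.congr_deriv ?_
      simp only [hg]; ring
    · intro p hp
      have h1 : HasDerivAt (fun y : ℝ => c * (y - x₀)) c p.2 := by
        simpa using ((hasDerivAt_id p.2).sub_const x₀).const_mul c
      have h2 := (h1.cos.const_mul (ε / 2 * Real.exp (K * (p.1 - t₁))))
      have h3 := (hvtx p hp).fun_add h2
      refine h3.congr_deriv ?_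
      ring
    · intro p hp
      have h1 : HasDerivAt (fun y : ℝ => c * (y - x₀)) c p.2 := by
        simpa using ((hasDerivAt_id p.2).sub_const x₀).const_mul c
      have h2 := ((h1.sin.mul_const c).const_mul (ε / 2 * Real.exp (K * (p.1 - t₁)))).fun_neg
      have h3 := (hvtxx p hp).fun_add h2
      refine h3.congr_deriv ?_
      simp only [hg]; ring
    · exact hcont.add (by fun_prop)
    · rintro p hp hd
      show vt p.1 p.2 + g p.1 p.2 ≤ 0
      obtain h | h | h := hd
      · rcases eq_or_lt_of_le hp.2.1 with h2 | h2
        · rw [h, ← h2]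
          linarith [(hglat t₁).1, hcorner.1]
        rcases eq_or_lt_of_le hp.2.2 with h3 | h3
        · rw [h, h3]
          linarith [(hglat t₁).2, hcorner.2]
        · have hv := hfin p.2 ⟨h2, h3⟩
          have hgle : g t₁ p.2 ≤ ε / 2 := by
            simp only [hg, sub_self, mul_zero, Real.exp_zero, mul_one]
            have hcle := Real.cos_le_one (c * (p.2 - x₀))
            nlinarith
          rw [h]; linarith
      · rw [h]
        linarith [(hglat p.1).1, (hlatIcc p.1 hp.1).1]
      · rw [h]
        linarith [(hglat p.1).2, (hlatIcc p.1 hp.1).2]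
    · intro p hp h1 h2 h3 hF hFxx
      show 0 < vtt p.1 p.2 + K * g p.1 p.2
      replace hF : 0 ≤ vt p.1 p.2 + g p.1 p.2 := hF
      replace hFxx : vtxx p.1 p.2 + -(c ^ 2 * g p.1 p.2) ≤ 0 := hFxx
      have hpde := hPDEt p hp
      have hgp : 0 < g p.1 p.2 := hgpos p.1 p.2 ⟨h2, h3⟩
      have hKp := hKb p.2 hp.2
      have ha : (0:ℝ) ≤ σ p.2 ^ 2 / 2 := by positivity
      have hr := hrnn p.2
      nlinarith [mul_nonneg hr hF,
        mul_nonneg ha (neg_nonneg.mpr hFxx),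
        mul_nonneg hgp.le (sub_nonneg.mpr (by linarith : r p.2 + σ p.2 ^ 2 / 2 * c ^ 2 + 1 ≤ K))]
  have hmem : ((t₀, x₀) : ℝ × ℝ) ∈ Icc t₀ t₁ ×ˢ Icc (x₀ - δ) (x₀ + δ) :=
    ⟨⟨le_rfl, ht.le⟩, ⟨by linarith, by linarith⟩⟩
  have h := hmain (t₀, x₀) hmem
  have hg0 : 0 < g t₀ x₀ := hgpos t₀ x₀ ⟨by linarith, by linarith⟩
  simp only at h
  linarith
end
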